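/- arXiv:math/0008218 — 2 statements merged into one kernel-verified Lean document; each statement's English description precedes it below -/
import Mathlib

section
/- Let Y₁ and Y₂ be compact length spaces with Y₂ semi-locally simply connected. If d_GH(Y₁, Y₂) ≤ r(Y₂)/20, then there exists a surjective group homomorphism Φ : π₁(Y₁) → π₁(Y₂). -/
open Metric Filter Topology Set

noncomputable section

attribute [local instance] Path.Homotopic.setoid

/-! ### Basic metric-geometric notions -/

/-- The length of a path in a metric space: the total variation of the path. -/
def Path.elength {X : Type} [MetricSpace X] {x y : X} (γ : Path x y) : ENNReal :=
  eVariationOn (fun t : ℝ => γ.extend t) (Set.Icc (0 : ℝ) 1)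

/-- A metric space is a length space if the distance between any two points is the
infimum of the lengths of paths joining them. -/
def IsLengthSpace (X : Type) [MetricSpace X] : Prop :=
  ∀ x y : X, edist x y = ⨅ γ : Path x y, γ.elength

/-- A bundled compact nonempty metric space. -/
structure CptMS where
  X : Type
  [m : MetricSpace X]
  [cpt : CompactSpace X]
  [nem : Nonempty X]

attribute [instance] CptMS.m CptMS.cpt CptMS.nem

/-- A bundled pointed metric space. -/
structure PtdMS where
  X : Type
  [m : MetricSpace X]
  pt : X

attribute [instance] PtdMS.m

/-- Pointed Gromov-Hausdorff convergence of a sequence of pointed metric spaces `A i`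
to the pointed metric space `B`, expressed via pointed ε-approximations on balls of
every radius `R` about the basepoints. -/
def PtdGHLimit (A : ℕ → PtdMS) (B : PtdMS) : Prop :=
  ∀ R > (0 : ℝ), ∀ ε > (0 : ℝ), ∃ N : ℕ, ∀ i ≥ N, ∃ f : (A i).X → B.X,
    f (A i).pt = B.pt ∧
    (∀ a b : (A i).X, dist a (A i).pt ≤ R → dist b (A i).pt ≤ R →
      |dist (f a) (f b) - dist a b| ≤ ε) ∧
    (∀ z : B.X, dist z B.pt ≤ R → ∃ a : (A i).X, dist a (A i).pt ≤ R ∧ dist z (f a) ≤ ε)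

/-! ### Covering spaces, deck transformations and universal covers -/

/-- The deck transformation group of a map `π : E → X`: the group of self-homeomorphisms
of `E` commuting with `π`, as a subgroup of the permutation group of `E`. -/
def Deck {E X : Type} [TopologicalSpace E] [TopologicalSpace X] (π : E → X) :
    Subgroup (Equiv.Perm E) where
  carrier := {h | Continuous h ∧ Continuous h.symm ∧ ∀ e, π (h e) = π e}
  one_mem' := ⟨continuous_id, continuous_id, fun _ => rfl⟩
  mul_mem' := by
    rintro f g ⟨hf1, hf2, hf3⟩ ⟨hg1, hg2, hg3⟩
    exact ⟨hf1.comp hg1, hg2.comp hf2, fun e => (hf3 (g e)).trans (hg3 e)⟩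
  inv_mem' := by
    rintro f ⟨hf1, hf2, hf3⟩
    refine ⟨hf2, hf1, fun e => ?_⟩
    conv_rhs => rw [show e = f (f⁻¹ e) from (Equiv.apply_symm_apply f e).symm]
    rw [hf3]

/-- `π : E → X` is a universal cover: `E` is connected, `π` is a covering map, and
every covering map onto `X` is factored through by `π` (via a continuous map commuting
with the projections). -/
structure IsUniversalCover {E X : Type} [TopologicalSpace E] [TopologicalSpace X]
    (π : E → X) : Prop where
  covering : IsCoveringMap π
  conn : ConnectedSpace E
  lifts : ∀ (E' : Type) (_ : TopologicalSpace E') (π' : E' → X), IsCoveringMap π' →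
    ∃ f : E → E', Continuous f ∧ π' ∘ f = π

/-- A bundled (topological) covering candidate over `X`: a space with a map to `X`. -/
structure Cover (X : Type) [TopologicalSpace X] where
  E : Type
  [tE : TopologicalSpace E]
  π : E → X

attribute [instance] Cover.tE

/-- The universal cover of `X` exists. -/
def UniversalCoverExists (X : Type) [TopologicalSpace X] : Prop :=
  ∃ c : Cover X, IsUniversalCover c.π

/-- A bundled metric covering candidate over the metric space `X`. -/
structure MCov (X : Type) [MetricSpace X] where
  E : Type
  [m : MetricSpace E]
  π : E → X

attribute [instance] MCov.m

/-! ### Fundamental group notions -/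

/-- The homotopy class of a loop, as an element of the fundamental group. -/
def loopClass {Y : Type} [TopologicalSpace Y] {y : Y} (γ : Path y y) :
    FundamentalGroup Y y :=
  FundamentalGroup.fromPath (X := TopCat.of Y) ⟦γ⟧

/-- `Y` is semi-locally simply connected: every point has a neighborhood `U` such that
every loop lying in `U` is null-homotopic in `Y`. -/
def SemiLocallySimplyConnected (Y : Type) [TopologicalSpace Y] : Prop :=
  ∀ y : Y, ∃ U : Set Y, IsOpen U ∧ y ∈ U ∧
    ∀ (z : Y) (γ : Path z z), (∀ t, γ t ∈ U) → loopClass γ = 1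

/-- The Spanier subgroup `π₁(Y, δ, p)` of the fundamental group associated to the open
cover of `Y` by all open `δ`-balls: the normal subgroup generated by the classes of
loops of the form `α⁻¹ ∘ β ∘ α`, where `β` is a loop lying in some open ball of radius
`δ` and `α` is a path from `p` to `β 0`. -/
def piDelta (Y : Type) [MetricSpace Y] (δ : ℝ) (p : Y) : Subgroup (FundamentalGroup Y p) :=
  Subgroup.normalClosure
    {g | ∃ (q c : Y) (β : Path q q) (α : Path p q),
      (∀ t, β t ∈ Metric.ball c δ) ∧ g = loopClass ((α.trans β).trans α.symm)}

instance piDelta_normal (Y : Type) [MetricSpace Y] (δ : ℝ) (p : Y) :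
    (piDelta Y δ p).Normal :=
  Subgroup.normalClosure_normal

/-- The group `G(Y, δ) = π₁(Y, p) / π₁(Y, δ, p)`, the deck transformation group of the
`δ`-cover `Ỹ^δ` of `Y`. -/
def GDelta (Y : Type) [MetricSpace Y] (δ : ℝ) (p : Y) : Type :=
  FundamentalGroup Y p ⧸ piDelta Y δ p

instance (Y : Type) [MetricSpace Y] (δ : ℝ) (p : Y) : Group (GDelta Y δ p) :=
  QuotientGroup.Quotient.group _

/-- `π : E → Y` is (isometrically equivalent to) the `δ`-cover `Ỹ^δ` of `Y`, equipped
with the lifted length metric: `π` is a covering map from a connected length space,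
it is distance nonincreasing and a local isometry, and a loop in `Y` lifts to a closed
loop in `E` exactly when its homotopy class lies in the Spanier subgroup `π₁(Y, δ, p)`. -/
structure IsDeltaCover {E Y : Type} [MetricSpace E] [MetricSpace Y] (π : E → Y)
    (δ : ℝ) : Prop where
  covering : IsCoveringMap π
  surj : Function.Surjective π
  conn : ConnectedSpace E
  length : IsLengthSpace E
  nonexpanding : ∀ a b : E, dist (π a) (π b) ≤ dist a b
  localIsometry : ∀ e : E, ∃ ε > 0, ∀ a ∈ Metric.ball e ε, ∀ b ∈ Metric.ball e ε,
    dist (π a) (π b) = dist a b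
  lifted_loops : ∀ (p : Y) (γ : Path p p) (e : E) (γ' : C(unitInterval, E)),
    π e = p → (∀ t, π (γ' t) = γ t) → γ' 0 = e →
      (γ' 1 = e ↔ loopClass γ ∈ piDelta Y δ p)

/-- The deck transformation `h` of a cover `π : E → Y` represents the element `g` of the
fundamental group `π₁(Y, p)` (relative to some lift of the basepoint): some loop `γ`
representing `g` lifts to a path from a point `e` in the fiber over `p` to `h e`. -/
def RepresentsDeck {E Y : Type} [MetricSpace E] [MetricSpace Y] (π : E → Y) {p : Y}
    (g : FundamentalGroup Y p) (h : Equiv.Perm E) : Prop :=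
  h ∈ Deck π ∧ ∃ (γ : Path p p) (e : E) (γ' : C(unitInterval, E)),
    loopClass γ = g ∧ π e = p ∧ (∀ t, π (γ' t) = γ t) ∧ γ' 0 = e ∧ γ' 1 = h e



section aux
variable {W : Type} [MetricSpace W]

theorem IsLengthSpace.exists_path (hW : IsLengthSpace W) (x y : W) {σ : ℝ} (hσ : 0 < σ) :
    ∃ γ : Path x y, ∀ t, dist x (γ t) ≤ dist x y + σ := by
  have h := hW x y
  have hlt : (⨅ γ : Path x y, γ.elength) < edist x y + ENNReal.ofReal σ := by
    rw [← h]
    exact ENNReal.lt_add_right (edist_ne_top x y) (by simpa using hσ)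
  obtain ⟨γ, hγ⟩ := iInf_lt_iff.mp hlt
  refine ⟨γ, fun t => ?_⟩
  have h1 : edist x (γ t) ≤ γ.elength := by
    have h2 := eVariationOn.edist_le (fun s : ℝ => γ.extend s)
      (s := Icc (0:ℝ) 1) (x := (0:ℝ)) (y := (t:ℝ)) ⟨le_refl 0, zero_le_one⟩ t.2
    simpa [Path.elength, Path.extend_extends' γ t] using h2
  have h3 : edist x (γ t) ≤ edist x y + ENNReal.ofReal σ := h1.trans hγ.le
  rw [edist_dist, edist_dist, ← ENNReal.ofReal_add dist_nonneg hσ.le,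
    ENNReal.ofReal_le_ofReal_iff (by positivity)] at h3
  exact h3

theorem IsLengthSpace.pathConnectedSpace (hW : IsLengthSpace W) [Nonempty W] :
    PathConnectedSpace W :=
  ⟨‹_›, fun x y => ⟨(hW.exists_path x y one_pos).choose⟩⟩

end aux

section grpd
open CategoryTheory
variable {Y : Type} [TopologicalSpace Y]

/-- The morphism in the fundamental groupoid determined by a path. -/
abbrev mor {x y : Y} (P : Path x y) :
    FundamentalGroupoid.mk x ⟶ FundamentalGroupoid.mk y := ⟦P⟧

theorem mor_trans {x y z : Y} (P : Path x y) (Q : Path y z) :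
    mor (P.trans Q) = mor P ≫ mor Q := by
  rw [FundamentalGroupoid.comp_eq]
  exact Path.Homotopic.Quotient.mk_trans P Q

theorem mor_symm {x y : Y} (P : Path x y) :
    mor (P.symm) = Groupoid.inv (mor P) := rfl

theorem mor_cast {x y x' y' : Y} (P : Path x y) (Q : Path x' y')
    (hx : x = x') (hy : y = y') (h : ∀ t, P t = Q t) :
    mor P = eqToHom (by rw [hx]) ≫ mor Q ≫ eqToHom (by rw [hy]) := by
  subst hx; subst hy
  have : P = Q := by ext t; exact h t
  subst this; simp

theorem loopClass_hom {y : Y} (γ : Path y y) (h : loopClass γ = 1) :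
    mor γ = 𝟙 (FundamentalGroupoid.mk y) :=
  h

theorem mor_eq_of_loopClass {x y : Y} (P Q : Path x y)
    (h : loopClass (P.trans Q.symm) = 1) : mor P = mor Q := by
  have h2 : mor P ≫ Groupoid.inv (mor Q) = 𝟙 _ := by
    rw [← mor_symm, ← mor_trans]; exact loopClass_hom _ h
  calc mor P = (mor P ≫ Groupoid.inv (mor Q)) ≫ mor Q := by simp
  _ = mor Q := by rw [h2]; simp

end grpd
section push
variable {W : Type} [MetricSpace W]

/-- A chosen almost-geodesic between two points of a length space. -/
def sPath (hW : IsLengthSpace W) {σ : ℝ} (hσ : 0 < σ) (x y : W) : Path x y :=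
  (hW.exists_path x y hσ).choose

theorem sPath_dist (hW : IsLengthSpace W) {σ : ℝ} (hσ : 0 < σ) (x y : W) (t : unitInterval) :
    dist x (sPath hW hσ x y t) ≤ dist x y + σ :=
  (hW.exists_path x y hσ).choose_spec t

theorem sPath_ball (hW : IsLengthSpace W) {σ : ℝ} (hσ : 0 < σ) (x y c : W) {R : ℝ}
    (h : dist c x + (dist x y + σ) < R) (t : unitInterval) :
    sPath hW hσ x y t ∈ Metric.ball c R := by
  rw [Metric.mem_ball, dist_comm]
  calc dist c (sPath hW hσ x y t) ≤ dist c x + dist x (sPath hW hσ x y t) := dist_triangle _ _ _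
  _ ≤ dist c x + (dist x y + σ) := by have := sPath_dist hW hσ x y t; linarith
  _ < R := h

/-- The dyadic chain path associated to a node function `ξ`. -/
def push (hW : IsLengthSpace W) {σ : ℝ} (hσ : 0 < σ) (ξ : ℝ → W) :
    (k : ℕ) → (a : ℝ) → (b : ℝ) → Path (ξ a) (ξ b)
  | 0, a, b => sPath hW hσ (ξ a) (ξ b)
  | (k+1), a, b => (push hW hσ ξ k a ((a+b)/2)).trans (push hW hσ ξ k ((a+b)/2) b)

theorem trans_ball {Y : Type} [TopologicalSpace Y] {x y z : Y} (P : Path x y) (Q : Path y z)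
    {s : Set Y} (hP : ∀ t, P t ∈ s) (hQ : ∀ t, Q t ∈ s) : ∀ t, (P.trans Q) t ∈ s := by
  intro t; rw [Path.trans_apply]; split_ifs; exacts [hP _, hQ _]

/-- Pointwise tracking of a push against a reference map, through an isometry. -/
theorem push_track (hW : IsLengthSpace W) {σ : ℝ} (hσ : 0 < σ) {Z : Type} [MetricSpace Z]
    (ι : W → Z) (hι : Isometry ι) (ξ : ℝ → W) (ρ : ℝ → Z) {Cξ Cρ Cc : ℝ} :
    ∀ (k : ℕ) (a b : ℝ), a ≤ b →
    (∀ s ∈ Set.Icc a b, ∀ t ∈ Set.Icc a b, |s - t| ≤ (b - a)/2^k → dist (ξ s) (ξ t) ≤ Cξ) →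
    (∀ s ∈ Set.Icc a b, ∀ t ∈ Set.Icc a b, |s - t| ≤ (b - a)/2^k → dist (ρ s) (ρ t) ≤ Cρ) →
    (∀ s ∈ Set.Icc a b, dist (ι (ξ s)) (ρ s) ≤ Cc) →
    ∀ t : unitInterval, dist (ι ((push hW hσ ξ k a b) t)) (ρ (a + t*(b-a))) ≤ Cξ + σ + Cc + Cρ
  | 0, a, b, hab, hmξ, hmρ, hc, t => by
    have h0 : (a : ℝ) ∈ Set.Icc a b := ⟨le_refl a, hab⟩
    have h1 : (b : ℝ) ∈ Set.Icc a b := ⟨hab, le_refl b⟩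
    have ht : a + (t:ℝ)*(b-a) ∈ Set.Icc a b := by
      constructor
      · nlinarith [t.2.1, t.2.2, sub_nonneg.mpr hab]
      · nlinarith [t.2.1, t.2.2, sub_nonneg.mpr hab]
    have e1 : dist (ξ a) ((push hW hσ ξ 0 a b) t) ≤ Cξ + σ := by
      have := sPath_dist hW hσ (ξ a) (ξ b) t
      have h2 : dist (ξ a) (ξ b) ≤ Cξ := by
        apply hmξ a h0 b h1
        rw [abs_sub_comm, abs_of_nonneg (sub_nonneg.mpr hab)]
        simp
      calc dist (ξ a) ((push hW hσ ξ 0 a b) t) ≤ dist (ξ a) (ξ b) + σ := this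
      _ ≤ Cξ + σ := by linarith
    have e2 : dist (ι (ξ a)) (ρ a) ≤ Cc := hc a h0
    have e3 : dist (ρ a) (ρ (a + t*(b-a))) ≤ Cρ := by
      apply hmρ a h0 _ ht
      rw [pow_zero, div_one, abs_sub_comm]
      rw [abs_of_nonneg (by nlinarith [t.2.1, sub_nonneg.mpr hab] : (0:ℝ) ≤ a + t*(b-a) - a)]
      nlinarith [t.2.2, sub_nonneg.mpr hab]
    calc dist (ι ((push hW hσ ξ 0 a b) t)) (ρ (a + t*(b-a)))
        ≤ dist (ι ((push hW hσ ξ 0 a b) t)) (ι (ξ a)) + dist (ι (ξ a)) (ρ a)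
            + dist (ρ a) (ρ (a + t*(b-a))) := dist_triangle4 _ _ _ _
    _ ≤ (Cξ + σ) + Cc + Cρ := by
        rw [hι.dist_eq, dist_comm]
        linarith
    _ = Cξ + σ + Cc + Cρ := by ring
  | (k+1), a, b, hab, hmξ, hmρ, hc, t => by
    set m := (a+b)/2 with hm
    have ham : a ≤ m := by simp only [hm]; linarith
    have hmb : m ≤ b := by simp only [hm]; linarith
    have hIl : Set.Icc a m ⊆ Set.Icc a b := Set.Icc_subset_Icc (le_refl a) hmb
    have hIr : Set.Icc m b ⊆ Set.Icc a b := Set.Icc_subset_Icc ham (le_refl b)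
    have hml : m - a = (b-a)/2 := by simp only [hm]; ring
    have hmr : b - m = (b-a)/2 := by simp only [hm]; ring
    rw [push, Path.trans_apply]
    split_ifs with h
    · have IH := push_track hW hσ ι hι ξ ρ k a m ham
        (fun s hs t ht hst => hmξ s (hIl hs) t (hIl ht) (by rw [hml] at hst; calc |s-t| ≤ (b-a)/2/2^k := hst
          _ = (b-a)/2^(k+1) := by ring))
        (fun s hs t ht hst => hmρ s (hIl hs) t (hIl ht) (by rw [hml] at hst; calc |s-t| ≤ (b-a)/2/2^k := hst
          _ = (b-a)/2^(k+1) := by ring))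
        (fun s hs => hc s (hIl hs))
        ⟨2*t, by constructor <;> [linarith [t.2.1]; linarith [t.2.1]]⟩
      convert IH using 3
      push_cast
      rw [hml]; ring
    · have IH := push_track hW hσ ι hι ξ ρ k m b hmb
        (fun s hs t ht hst => hmξ s (hIr hs) t (hIr ht) (by rw [hmr] at hst; calc |s-t| ≤ (b-a)/2/2^k := hst
          _ = (b-a)/2^(k+1) := by ring))
        (fun s hs t ht hst => hmρ s (hIr hs) t (hIr ht) (by rw [hmr] at hst; calc |s-t| ≤ (b-a)/2/2^k := hst
          _ = (b-a)/2^(k+1) := by ring))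
        (fun s hs => hc s (hIr hs))
        ⟨2*t - 1, by constructor <;> [linarith [not_le.mp h |>.le]; linarith [t.2.2]]⟩
      convert IH using 3
      push_cast
      rw [hmr]; simp only [hm]; ring

end push
section ytwo
open CategoryTheory
variable {Y : Type} [MetricSpace Y] {ε₀ : ℝ}

theorem mor_eq_of_ball {r : ℝ}
    (hrY : ∀ (c z : Y) (γ : Path z z), (∀ t, γ t ∈ Metric.ball c r) → loopClass γ = 1)
    {x y c : Y} (P Q : Path x y)
    (hP : ∀ t, P t ∈ Metric.ball c r) (hQ : ∀ t, Q t ∈ Metric.ball c r) : mor P = mor Q := by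
  apply mor_eq_of_loopClass
  apply hrY c
  intro t
  rw [Path.trans_apply]
  split_ifs
  · exact hP _
  · exact hQ _

variable (hY : IsLengthSpace Y) (hε₀ : 0 < ε₀) (hσ : 0 < ε₀/4)
  (hrY : ∀ (c z : Y) (γ : Path z z), (∀ t, γ t ∈ Metric.ball c (20*ε₀)) → loopClass γ = 1)

/-- An affine segment of a continuous reference curve, as a path. -/
def seg (ρ : ℝ → Y) (hρ : Continuous ρ) (a b : ℝ) : Path (ρ a) (ρ b) where
  toFun t := ρ (a + (t:ℝ)*(b-a))
  continuous_toFun := hρ.comp (by continuity)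
  source' := by norm_num
  target' := by norm_num

theorem seg_apply (ρ : ℝ → Y) (hρ : Continuous ρ) (a b : ℝ) (t : unitInterval) :
    seg ρ hρ a b t = ρ (a + (t:ℝ)*(b-a)) := rfl

theorem seg_split (ρ : ℝ → Y) (hρ : Continuous ρ) (a b : ℝ) :
    (seg ρ hρ a ((a+b)/2)).trans (seg ρ hρ ((a+b)/2) b) = seg ρ hρ a b := by
  ext t
  rw [Path.trans_apply]
  split_ifs with h
  · show ρ _ = ρ _
    congr 1
    push_cast
    ring
  · show ρ _ = ρ _
    congr 1
    push_cast
    ring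

include hY hε₀ hσ hrY

/-- Depth independence of the push. -/
theorem push_depth (ξ : ℝ → Y) : ∀ (k : ℕ) (a b : ℝ), a ≤ b →
    (∀ s ∈ Set.Icc a b, ∀ t ∈ Set.Icc a b, |s - t| ≤ (b - a)/2^k →
      dist (ξ s) (ξ t) ≤ (9/4)*ε₀) →
    mor (push hY hσ ξ (k+1) a b) = mor (push hY hσ ξ k a b)
  | 0, a, b, hab, hmξ => by
    have h0 : (a : ℝ) ∈ Set.Icc a b := ⟨le_refl a, hab⟩
    have h1 : (b : ℝ) ∈ Set.Icc a b := ⟨hab, le_refl b⟩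
    have hm : (a+b)/2 ∈ Set.Icc a b := ⟨by linarith, by linarith⟩
    have habs : ∀ s ∈ Set.Icc a b, ∀ t ∈ Set.Icc a b, |s - t| ≤ (b-a)/2^0 := by
      intro s hs t ht
      rw [pow_zero, div_one, abs_sub_le_iff]
      constructor <;> linarith [hs.1, hs.2, ht.1, ht.2]
    have d1 : dist (ξ a) (ξ b) ≤ (9/4)*ε₀ := hmξ a h0 b h1 (habs a h0 b h1)
    have d2 : dist (ξ a) (ξ ((a+b)/2)) ≤ (9/4)*ε₀ := hmξ a h0 _ hm (habs a h0 _ hm)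
    have d3 : dist (ξ ((a+b)/2)) (ξ b) ≤ (9/4)*ε₀ := hmξ _ hm b h1 (habs _ hm b h1)
    simp only [push]
    rw [mor_trans]
    rw [← mor_trans]
    apply mor_eq_of_ball hrY (c := ξ a)
    · apply trans_ball
      · exact sPath_ball hY hσ _ _ _ (by simp [dist_self]; linarith) 
      · exact sPath_ball hY hσ _ _ _ (by linarith)
    · exact sPath_ball hY hσ _ _ _ (by simp [dist_self]; linarith)
  | (k+1), a, b, hab, hmξ => by
    have ham : a ≤ (a+b)/2 := by linarith
    have hmb : (a+b)/2 ≤ b := by linarith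
    have hIl : Set.Icc a ((a+b)/2) ⊆ Set.Icc a b := Set.Icc_subset_Icc (le_refl a) hmb
    have hIr : Set.Icc ((a+b)/2) b ⊆ Set.Icc a b := Set.Icc_subset_Icc ham (le_refl b)
    have hscale : ∀ s t : ℝ, |s - t| ≤ ((a+b)/2 - a)/2^k → |s - t| ≤ (b-a)/2^(k+1) := by
      intro s t h; calc |s-t| ≤ ((a+b)/2 - a)/2^k := h
      _ = (b-a)/2^(k+1) := by ring
    have hscale' : ∀ s t : ℝ, |s - t| ≤ (b - (a+b)/2)/2^k → |s - t| ≤ (b-a)/2^(k+1) := by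
      intro s t h; calc |s-t| ≤ (b - (a+b)/2)/2^k := h
      _ = (b-a)/2^(k+1) := by ring
    have IHl := push_depth ξ k a ((a+b)/2) ham
      (fun s hs t ht hst => hmξ s (hIl hs) t (hIl ht) (hscale s t hst))
    have IHr := push_depth ξ k ((a+b)/2) b hmb
      (fun s hs t ht hst => hmξ s (hIr hs) t (hIr ht) (hscale' s t hst))
    show mor ((push hY hσ ξ (k+1) a ((a+b)/2)).trans (push hY hσ ξ (k+1) ((a+b)/2) b)) = _
    rw [mor_trans, IHl, IHr, ← mor_trans]
    rfl

end ytwo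
section ytwo2
open CategoryTheory
variable {Y : Type} [MetricSpace Y] {ε₀ : ℝ}
variable (hY : IsLengthSpace Y) (hε₀ : 0 < ε₀) (hσ : 0 < ε₀/4)
  (hrY : ∀ (c z : Y) (γ : Path z z), (∀ t, γ t ∈ Metric.ball c (20*ε₀)) → loopClass γ = 1)

include hY hε₀ hσ hrY

theorem push_depth_ge (ξ : ℝ → Y) (k k' : ℕ) (hkk' : k ≤ k') (a b : ℝ) (hab : a ≤ b)
    (hmξ : ∀ s ∈ Set.Icc a b, ∀ t ∈ Set.Icc a b, |s - t| ≤ (b - a)/2^k →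
      dist (ξ s) (ξ t) ≤ (9/4)*ε₀) :
    mor (push hY hσ ξ k' a b) = mor (push hY hσ ξ k a b) := by
  induction k', hkk' using Nat.le_induction with
  | base => rfl
  | succ n hkn IH =>
    have hsc : ∀ s t : ℝ, |s - t| ≤ (b-a)/2^n → |s - t| ≤ (b-a)/2^k := by
      intro s t h
      refine h.trans (div_le_div_of_nonneg_left (sub_nonneg.mpr hab) (by positivity) ?_)
      exact pow_le_pow_right₀ one_le_two hkn
    rw [push_depth hY hε₀ hσ hrY ξ n a b hab
      (fun s hs t ht hst => hmξ s hs t ht (hsc s t hst)), IH]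

/-- Two pointwise-close chains are homotopic modulo the connecting short paths. -/
theorem push_close (ξ ξ' : ℝ → Y) : ∀ (k : ℕ) (a b : ℝ), a ≤ b →
    (∀ s ∈ Set.Icc a b, ∀ t ∈ Set.Icc a b, |s - t| ≤ (b - a)/2^k →
      dist (ξ s) (ξ t) ≤ (9/4)*ε₀) →
    (∀ s ∈ Set.Icc a b, ∀ t ∈ Set.Icc a b, |s - t| ≤ (b - a)/2^k →
      dist (ξ' s) (ξ' t) ≤ (9/4)*ε₀) →
    (∀ s ∈ Set.Icc a b, dist (ξ s) (ξ' s) ≤ 5*ε₀) →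
    mor (push hY hσ ξ k a b) ≫ mor (sPath hY hσ (ξ b) (ξ' b))
      = mor (sPath hY hσ (ξ a) (ξ' a)) ≫ mor (push hY hσ ξ' k a b)
  | 0, a, b, hab, hmξ, hmξ', hcl => by
    have h0 : (a : ℝ) ∈ Set.Icc a b := ⟨le_refl a, hab⟩
    have h1 : (b : ℝ) ∈ Set.Icc a b := ⟨hab, le_refl b⟩
    have habs : |a - b| ≤ (b-a)/2^0 := by
      rw [pow_zero, div_one, abs_sub_comm, abs_of_nonneg (sub_nonneg.mpr hab)]
    have d1 : dist (ξ a) (ξ b) ≤ (9/4)*ε₀ := hmξ a h0 b h1 habs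
    have d2 : dist (ξ' a) (ξ' b) ≤ (9/4)*ε₀ := hmξ' a h0 b h1 habs
    have d3 : dist (ξ a) (ξ' a) ≤ 5*ε₀ := hcl a h0
    have d4 : dist (ξ b) (ξ' b) ≤ 5*ε₀ := hcl b h1
    simp only [push]
    rw [← mor_trans, ← mor_trans]
    apply mor_eq_of_ball hrY (c := ξ a)
    · apply trans_ball
      · exact sPath_ball hY hσ _ _ _ (by simp [dist_self]; linarith)
      · exact sPath_ball hY hσ _ _ _ (by linarith)
    · apply trans_ball
      · exact sPath_ball hY hσ _ _ _ (by simp [dist_self]; linarith)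
      · exact sPath_ball hY hσ _ _ _ (by linarith)
  | (k+1), a, b, hab, hmξ, hmξ', hcl => by
    have ham : a ≤ (a+b)/2 := by linarith
    have hmb : (a+b)/2 ≤ b := by linarith
    have hIl : Set.Icc a ((a+b)/2) ⊆ Set.Icc a b := Set.Icc_subset_Icc (le_refl a) hmb
    have hIr : Set.Icc ((a+b)/2) b ⊆ Set.Icc a b := Set.Icc_subset_Icc ham (le_refl b)
    have hscale : ∀ s t : ℝ, |s - t| ≤ ((a+b)/2 - a)/2^k → |s - t| ≤ (b-a)/2^(k+1) := by
      intro s t h; calc |s-t| ≤ ((a+b)/2 - a)/2^k := h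
      _ = (b-a)/2^(k+1) := by ring
    have hscale' : ∀ s t : ℝ, |s - t| ≤ (b - (a+b)/2)/2^k → |s - t| ≤ (b-a)/2^(k+1) := by
      intro s t h; calc |s-t| ≤ (b - (a+b)/2)/2^k := h
      _ = (b-a)/2^(k+1) := by ring
    have IHl := push_close ξ ξ' k a ((a+b)/2) ham
      (fun s hs t ht hst => hmξ s (hIl hs) t (hIl ht) (hscale s t hst))
      (fun s hs t ht hst => hmξ' s (hIl hs) t (hIl ht) (hscale s t hst))
      (fun s hs => hcl s (hIl hs))
    have IHr := push_close ξ ξ' k ((a+b)/2) b hmb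
      (fun s hs t ht hst => hmξ s (hIr hs) t (hIr ht) (hscale' s t hst))
      (fun s hs t ht hst => hmξ' s (hIr hs) t (hIr ht) (hscale' s t hst))
      (fun s hs => hcl s (hIr hs))
    show mor ((push hY hσ ξ k a ((a+b)/2)).trans (push hY hσ ξ k ((a+b)/2) b)) ≫ _
      = _ ≫ mor ((push hY hσ ξ' k a ((a+b)/2)).trans (push hY hσ ξ' k ((a+b)/2) b))
    rw [mor_trans, mor_trans, Category.assoc, IHr, ← Category.assoc, IHl, Category.assoc]

/-- A chain tracking a continuous reference curve is homotopic to it,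
modulo the connecting short paths. -/
theorem push_vs_ref (ξ : ℝ → Y) (ρ : ℝ → Y) (hρ : Continuous ρ) :
    ∀ (k : ℕ) (a b : ℝ), a ≤ b →
    (∀ s ∈ Set.Icc a b, ∀ t ∈ Set.Icc a b, |s - t| ≤ (b - a)/2^k →
      dist (ρ s) (ρ t) ≤ ε₀/4) →
    (∀ s ∈ Set.Icc a b, dist (ξ s) (ρ s) ≤ 5*ε₀) →
    mor (push hY hσ ξ k a b) ≫ mor (sPath hY hσ (ξ b) (ρ b))
      = mor (sPath hY hσ (ξ a) (ρ a)) ≫ mor (seg ρ hρ a b)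
  | 0, a, b, hab, hmρ, hcl => by
    have h0 : (a : ℝ) ∈ Set.Icc a b := ⟨le_refl a, hab⟩
    have h1 : (b : ℝ) ∈ Set.Icc a b := ⟨hab, le_refl b⟩
    have habs : |a - b| ≤ (b-a)/2^0 := by
      rw [pow_zero, div_one, abs_sub_comm, abs_of_nonneg (sub_nonneg.mpr hab)]
    have dρ : dist (ρ a) (ρ b) ≤ ε₀/4 := hmρ a h0 b h1 habs
    have d3 : dist (ξ a) (ρ a) ≤ 5*ε₀ := hcl a h0
    have d4 : dist (ξ b) (ρ b) ≤ 5*ε₀ := hcl b h1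
    have d1 : dist (ξ a) (ξ b) ≤ 5*ε₀ + ε₀/4 + 5*ε₀ := by
      calc dist (ξ a) (ξ b) ≤ dist (ξ a) (ρ a) + dist (ρ a) (ρ b) + dist (ρ b) (ξ b) :=
        dist_triangle4 _ _ _ _
      _ ≤ 5*ε₀ + ε₀/4 + 5*ε₀ := by rw [dist_comm (ρ b) (ξ b)]; linarith
    simp only [push]
    rw [← mor_trans, ← mor_trans]
    apply mor_eq_of_ball hrY (c := ξ a)
    · apply trans_ball
      · exact sPath_ball hY hσ _ _ _ (by simp [dist_self]; linarith)
      · exact sPath_ball hY hσ _ _ _ (by linarith)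
    · apply trans_ball
      · exact sPath_ball hY hσ _ _ _ (by simp [dist_self]; linarith)
      · intro t
        rw [seg_apply, Metric.mem_ball, dist_comm]
        have ht : a + (t:ℝ)*(b-a) ∈ Set.Icc a b := by
          constructor
          · nlinarith [t.2.1, t.2.2, sub_nonneg.mpr hab]
          · nlinarith [t.2.1, t.2.2, sub_nonneg.mpr hab]
        have : dist (ρ a) (ρ (a + (t:ℝ)*(b-a))) ≤ ε₀/4 := by
          apply hmρ a h0 _ ht
          rw [pow_zero, div_one, abs_sub_comm,
            abs_of_nonneg (by nlinarith [t.2.1, sub_nonneg.mpr hab] : (0:ℝ) ≤ a + t*(b-a) - a)]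
          nlinarith [t.2.2, sub_nonneg.mpr hab]
        calc dist (ξ a) (ρ (a + (t:ℝ)*(b-a)))
            ≤ dist (ξ a) (ρ a) + dist (ρ a) (ρ (a + (t:ℝ)*(b-a))) := dist_triangle _ _ _
        _ < 20*ε₀ := by linarith
  | (k+1), a, b, hab, hmρ, hcl => by
    have ham : a ≤ (a+b)/2 := by linarith
    have hmb : (a+b)/2 ≤ b := by linarith
    have hIl : Set.Icc a ((a+b)/2) ⊆ Set.Icc a b := Set.Icc_subset_Icc (le_refl a) hmb
    have hIr : Set.Icc ((a+b)/2) b ⊆ Set.Icc a b := Set.Icc_subset_Icc ham (le_refl b)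
    have hscale : ∀ s t : ℝ, |s - t| ≤ ((a+b)/2 - a)/2^k → |s - t| ≤ (b-a)/2^(k+1) := by
      intro s t h; calc |s-t| ≤ ((a+b)/2 - a)/2^k := h
      _ = (b-a)/2^(k+1) := by ring
    have hscale' : ∀ s t : ℝ, |s - t| ≤ (b - (a+b)/2)/2^k → |s - t| ≤ (b-a)/2^(k+1) := by
      intro s t h; calc |s-t| ≤ (b - (a+b)/2)/2^k := h
      _ = (b-a)/2^(k+1) := by ring
    have IHl := push_vs_ref ξ ρ hρ k a ((a+b)/2) ham
      (fun s hs t ht hst => hmρ s (hIl hs) t (hIl ht) (hscale s t hst))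
      (fun s hs => hcl s (hIl hs))
    have IHr := push_vs_ref ξ ρ hρ k ((a+b)/2) b hmb
      (fun s hs t ht hst => hmρ s (hIr hs) t (hIr ht) (hscale' s t hst))
      (fun s hs => hcl s (hIr hs))
    show mor ((push hY hσ ξ k a ((a+b)/2)).trans (push hY hσ ξ k ((a+b)/2) b)) ≫ _ = _
    rw [mor_trans, Category.assoc, IHr, ← Category.assoc, IHl, Category.assoc,
      ← mor_trans, seg_split]

end ytwo2
section glue
open CategoryTheory

theorem conj_step {C : Type*} [CategoryTheory.Category C] {x y a b a' b' : C}
    (A : a ⟶ b) (B : a' ⟶ b')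
    (e0 : a = a') (e1 : b = b') (h : A ≫ CategoryTheory.eqToHom e1 = CategoryTheory.eqToHom e0 ≫ B)
    (ha : x = a) (hb : b = y) :
    CategoryTheory.eqToHom ha ≫ A ≫ CategoryTheory.eqToHom hb
      = CategoryTheory.eqToHom (ha.trans e0) ≫ B ≫ CategoryTheory.eqToHom (e1.symm.trans hb) := by
  subst e0; subst e1; subst ha; subst hb
  simpa using h

variable {Y : Type} [MetricSpace Y] {ε₀ : ℝ}
variable (hY : IsLengthSpace Y) (hε₀ : 0 < ε₀) (hσ : 0 < ε₀/4)
  (hrY : ∀ (c z : Y) (γ : Path z z), (∀ t, γ t ∈ Metric.ball c (20*ε₀)) → loopClass γ = 1)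

include hε₀ hrY in
theorem mor_sPath_eq (x y : Y) (hxy : x = y) :
    mor (sPath hY hσ x y) = CategoryTheory.eqToHom (by rw [hxy]) := by
  subst hxy
  have : mor (sPath hY hσ x x) = mor (Path.refl x) := by
    apply mor_eq_of_ball hrY (c := x)
    · exact fun t => sPath_ball hY hσ _ _ _ (by simp [dist_self]; linarith) t
    · intro t
      simp only [Path.refl_apply]
      exact Metric.mem_ball_self (by linarith)
  rw [this]
  rfl

/-- Congruence for the push along affine reparametrization of node functions. -/
theorem push_congr {W : Type} [MetricSpace W] (hW : IsLengthSpace W) {σ : ℝ} (hσ' : 0 < σ)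
    (ξ ξ' : ℝ → W) : ∀ (k : ℕ) (a b a' b' : ℝ),
    (∀ t ∈ Set.Icc (0:ℝ) 1, ξ (a + t*(b-a)) = ξ' (a' + t*(b'-a'))) →
    ∀ t : unitInterval, (push hW hσ' ξ k a b) t = (push hW hσ' ξ' k a' b') t
  | 0, a, b, a', b', h, t => by
    have hx : ξ a = ξ' a' := by
      have := h 0 (by norm_num); simpa using this
    have hy : ξ b = ξ' b' := by
      have := h 1 (by norm_num); simpa using this
    show (sPath hW hσ' (ξ a) (ξ b)) t = (sPath hW hσ' (ξ' a') (ξ' b')) t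
    congr 1 <;> try rw [hx, hy]
  | (k+1), a, b, a', b', h, t => by
    have hl : ∀ u ∈ Set.Icc (0:ℝ) 1, ξ (a + u*((a+b)/2-a)) = ξ' (a' + u*((a'+b')/2-a')) := by
      intro u hu
      have := h (u/2) ⟨by linarith [hu.1], by linarith [hu.2]⟩
      calc ξ (a + u*((a+b)/2-a)) = ξ (a + (u/2)*(b-a)) := by ring_nf
      _ = ξ' (a' + (u/2)*(b'-a')) := this
      _ = ξ' (a' + u*((a'+b')/2-a')) := by ring_nf
    have hr : ∀ u ∈ Set.Icc (0:ℝ) 1, ξ ((a+b)/2 + u*(b-(a+b)/2)) = ξ' ((a'+b')/2 + u*(b'-(a'+b')/2)) := by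
      intro u hu
      have := h ((u+1)/2) ⟨by linarith [hu.1], by linarith [hu.2]⟩
      calc ξ ((a+b)/2 + u*(b-(a+b)/2)) = ξ (a + ((u+1)/2)*(b-a)) := by ring_nf
      _ = ξ' (a' + ((u+1)/2)*(b'-a')) := this
      _ = ξ' ((a'+b')/2 + u*(b'-(a'+b')/2)) := by ring_nf
    simp only [push]
    rw [Path.trans_apply, Path.trans_apply]
    split_ifs
    · exact push_congr hW hσ' ξ ξ' k a ((a+b)/2) a' ((a'+b')/2) hl _
    · exact push_congr hW hσ' ξ ξ' k ((a+b)/2) b ((a'+b')/2) b' hr _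

/-- Every path admits arbitrarily fine dyadic meshes. -/
theorem path_mesh {X : Type*} [MetricSpace X] {x y : X} (γ : Path x y) {c : ℝ} (hc : 0 < c) :
    ∃ K : ℕ, ∀ s t : ℝ, |s - t| ≤ 1/2^K → dist (γ.extend s) (γ.extend t) ≤ c := by
  have h1 : UniformContinuous (fun t : unitInterval => γ t) :=
    CompactSpace.uniformContinuous_of_continuous γ.continuous
  have h2 : UniformContinuous γ.extend := by
    have he : γ.extend = (fun t : unitInterval => γ t) ∘ Set.projIcc 0 1 zero_le_one := rfl
    rw [he]
    exact h1.comp (LipschitzWith.projIcc zero_le_one).uniformContinuous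
  rw [Metric.uniformContinuous_iff] at h2
  obtain ⟨δ, hδ, hd⟩ := h2 c hc
  obtain ⟨K, hK⟩ := exists_pow_lt_of_lt_one hδ (by norm_num : (1:ℝ)/2 < 1)
  refine ⟨K, fun s t hst => ?_⟩
  have : dist s t < δ := by
    rw [Real.dist_eq]
    calc |s - t| ≤ 1/2^K := hst
    _ = (1/2)^K := by rw [div_pow, one_pow]
    _ < δ := hK
  exact (hd this).le

end glue
section main
open CategoryTheory
variable {Y₁ Y₂ : Type} [MetricSpace Y₁] [MetricSpace Y₂]
  {Z : Type} [MetricSpace Z] {ι₁ : Y₁ → Z} {ι₂ : Y₂ → Z}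
  {ε₀ : ℝ}
  (hι₁ : Isometry ι₁) (hι₂ : Isometry ι₂)
  (hε₀ : 0 < ε₀) (hσ : 0 < ε₀/4)
  (hlen₂ : IsLengthSpace Y₂)
  (hrY : ∀ (c z : Y₂) (γ : Path z z), (∀ t, γ t ∈ Metric.ball c (20*ε₀)) → loopClass γ = 1)
  {f : Y₁ → Y₂} (hf : ∀ x, dist (ι₁ x) (ι₂ (f x)) ≤ ε₀)
  {p₁ : Y₁}

/-- Fineness of a path at dyadic scale `k`. -/
def ValidP {X : Type*} [MetricSpace X] {x y : X} (c : ℝ) (γ : Path x y) (k : ℕ) : Prop :=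
  ∀ s t : ℝ, |s - t| ≤ 1/2^k → dist (γ.extend s) (γ.extend t) ≤ c

theorem ValidP.mono {X : Type*} [MetricSpace X] {x y : X} {c : ℝ} {γ : Path x y} {k k' : ℕ}
    (h : ValidP c γ k) (hkk' : k ≤ k') : ValidP c γ k' := by
  intro s t hst
  refine h s t (hst.trans ?_)
  apply div_le_div_of_nonneg_left zero_le_one (by positivity)
  exact pow_le_pow_right₀ one_le_two hkk'

/-- The pushed-loop homotopy class of a loop at `p₁`, at dyadic scale `k`. -/
def pcl (hlen₂ : IsLengthSpace Y₂) (hσ : 0 < ε₀/4) (f : Y₁ → Y₂) (γ : Path p₁ p₁) (k : ℕ) :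
    (FundamentalGroupoid.mk (f p₁) : FundamentalGroupoid Y₂) ⟶ FundamentalGroupoid.mk (f p₁) :=
  eqToHom (by rw [Path.extend_zero]) ≫
    mor (push hlen₂ hσ (fun t => f (γ.extend t)) k 0 1) ≫
    eqToHom (by rw [Path.extend_one])

include hι₁ hι₂ hf in
theorem fdist (a b : Y₁) : dist (f a) (f b) ≤ dist a b + 2*ε₀ := by
  have h1 := hf a
  have h2 := hf b
  rw [← hι₂.dist_eq, ← hι₁.dist_eq a b]
  calc dist (ι₂ (f a)) (ι₂ (f b))
      ≤ dist (ι₂ (f a)) (ι₁ a) + dist (ι₁ a) (ι₁ b) + dist (ι₁ b) (ι₂ (f b)) :=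
        dist_triangle4 _ _ _ _
  _ ≤ dist (ι₁ a) (ι₁ b) + 2*ε₀ := by rw [dist_comm (ι₂ (f a))]; linarith

include hι₁ hι₂ hε₀ hf in
theorem mesh_push (γ : Path p₁ p₁) (k : ℕ) (hv : ValidP (ε₀/4) γ k) :
    ∀ s ∈ Set.Icc (0:ℝ) 1, ∀ t ∈ Set.Icc (0:ℝ) 1, |s - t| ≤ (1 - 0)/2^k →
      dist (f (γ.extend s)) (f (γ.extend t)) ≤ (9/4)*ε₀ := by
  intro s _ t _ hst
  have h1 : dist (γ.extend s) (γ.extend t) ≤ ε₀/4 := by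
    apply hv s t
    rw [show (1:ℝ) - 0 = 1 by ring] at hst
    exact hst
  have := fdist hι₁ hι₂ hf (γ.extend s) (γ.extend t)
  linarith

include hι₁ hι₂ hε₀ hσ hlen₂ hrY hf in
theorem pcl_depth (γ : Path p₁ p₁) (k k' : ℕ) (hkk' : k ≤ k') (hv : ValidP (ε₀/4) γ k) :
    pcl hlen₂ hσ f γ k' = pcl hlen₂ hσ f γ k := by
  unfold pcl
  rw [push_depth_ge hlen₂ hε₀ hσ hrY _ k k' hkk' 0 1 zero_le_one
    (mesh_push hι₁ hι₂ hε₀ hf γ k hv)]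

include hι₁ hι₂ hε₀ hσ hlen₂ hrY hf in
theorem pcl_close (α β : Path p₁ p₁) (k : ℕ) (hvα : ValidP (ε₀/4) α k)
    (hvβ : ValidP (ε₀/4) β k)
    (hcl : ∀ u : ℝ, dist (α.extend u) (β.extend u) ≤ ε₀/4) :
    pcl hlen₂ hσ f α k = pcl hlen₂ hσ f β k := by
  have hclose : ∀ s ∈ Set.Icc (0:ℝ) 1, dist (f (α.extend s)) (f (β.extend s)) ≤ 5*ε₀ := by
    intro s _
    have := fdist hι₁ hι₂ hf (α.extend s) (β.extend s)
    have := hcl s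
    linarith
  have E := push_close hlen₂ hε₀ hσ hrY (fun t => f (α.extend t)) (fun t => f (β.extend t))
    k 0 1 zero_le_one (mesh_push hι₁ hι₂ hε₀ hf α k hvα) (mesh_push hι₁ hι₂ hε₀ hf β k hvβ)
    hclose
  have e1 : f (α.extend (1:ℝ)) = f (β.extend (1:ℝ)) := by rw [Path.extend_one, Path.extend_one]
  have e0 : f (α.extend (0:ℝ)) = f (β.extend (0:ℝ)) := by rw [Path.extend_zero, Path.extend_zero]
  rw [mor_sPath_eq hlen₂ hε₀ hσ hrY _ _ e1, mor_sPath_eq hlen₂ hε₀ hσ hrY _ _ e0] at E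
  unfold pcl
  exact conj_step _ _ (by exact congrArg FundamentalGroupoid.mk e0) (by exact congrArg FundamentalGroupoid.mk e1) E _ _

end main
section main2
open CategoryTheory
variable {Y₁ Y₂ : Type} [MetricSpace Y₁] [MetricSpace Y₂]
  {Z : Type} [MetricSpace Z] {ι₁ : Y₁ → Z} {ι₂ : Y₂ → Z}
  {ε₀ : ℝ}
  (hι₁ : Isometry ι₁) (hι₂ : Isometry ι₂)
  (hε₀ : 0 < ε₀) (hσ : 0 < ε₀/4)
  (hlen₂ : IsLengthSpace Y₂)
  (hrY : ∀ (c z : Y₂) (γ : Path z z), (∀ t, γ t ∈ Metric.ball c (20*ε₀)) → loopClass γ = 1)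
  {f : Y₁ → Y₂} (hf : ∀ x, dist (ι₁ x) (ι₂ (f x)) ≤ ε₀)
  {p₁ : Y₁}

include hι₁ hι₂ hε₀ hσ hlen₂ hrY hf in
theorem pcl_homotopic (γ γ' : Path p₁ p₁) (h : Path.Homotopic γ γ') (k k' : ℕ)
    (hv : ValidP (ε₀/4) γ k) (hv' : ValidP (ε₀/4) γ' k') :
    pcl hlen₂ hσ f γ k = pcl hlen₂ hσ f γ' k' := by
  obtain ⟨F⟩ := h
  have hUC : UniformContinuous (fun u : unitInterval × unitInterval => F u) :=
    CompactSpace.uniformContinuous_of_continuous F.continuous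
  rw [Metric.uniformContinuous_iff] at hUC
  obtain ⟨δ, hδ, hd⟩ := hUC (ε₀/4) hσ
  obtain ⟨M, hM⟩ := exists_pow_lt_of_lt_one hδ (by norm_num : (1:ℝ)/2 < 1)
  have hM' : (1:ℝ)/2^M < δ := by
    rw [div_pow, one_pow] at hM; exact hM
  set N := max (max k k') M with hN
  set pj := Set.projIcc (0:ℝ) 1 zero_le_one with hpj
  set G : ℝ → Path p₁ p₁ := fun s => F.eval (pj s) with hG
  have hGext : ∀ s u : ℝ, (G s).extend u = F (pj s, pj u) := fun s u => rfl
  have hprox : ∀ x x' : ℝ, |x - x'| ≤ 1/2^M → dist (pj x) (pj x') < δ := by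
    intro x x' hxx
    have : dist (pj x) (pj x') ≤ dist x x' := by
      simpa using (LipschitzWith.projIcc (zero_le_one)).dist_le_mul x x'
    rw [Real.dist_eq] at this
    linarith
  have hvalG : ∀ s : ℝ, ValidP (ε₀/4) (G s) N := by
    intro s u u' huu
    rw [hGext, hGext]
    apply (hd ?_).le
    rw [Prod.dist_eq]
    apply max_lt (by simpa using hδ)
    apply hprox
    refine huu.trans ?_
    apply div_le_div_of_nonneg_left zero_le_one (by positivity)
    exact pow_le_pow_right₀ one_le_two (le_max_right _ _)
  have hcls : ∀ s s' : ℝ, |s - s'| ≤ 1/2^M → ∀ u : ℝ,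
      dist ((G s).extend u) ((G s').extend u) ≤ ε₀/4 := by
    intro s s' hss u
    rw [hGext, hGext]
    apply (hd ?_).le
    rw [Prod.dist_eq]
    exact max_lt (hprox _ _ hss) (by simpa using hδ)
  have claim : ∀ j : ℕ, pcl hlen₂ hσ f (G ((j:ℝ)/2^M)) N = pcl hlen₂ hσ f (G 0) N := by
    intro j
    induction j with
    | zero => norm_num
    | succ j IH =>
      rw [← IH]
      apply pcl_close hι₁ hι₂ hε₀ hσ hlen₂ hrY hf _ _ N (hvalG _) (hvalG _)
      intro u
      apply hcls
      rw [show ((j+1:ℕ):ℝ)/2^M - ((j:ℕ):ℝ)/2^M = 1/2^M by push_cast; ring]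
      rw [abs_of_nonneg (by positivity)]

  have hG0 : G 0 = γ := by
    rw [hG]
    simp only [hpj, Set.projIcc_left]
    exact F.eval_zero
  have hG1 : G 1 = γ' := by
    rw [hG]
    simp only [hpj, Set.projIcc_right]
    exact F.eval_one
  have h2M : ((2^M : ℕ) : ℝ)/2^M = (1:ℝ) := by
    push_cast
    field_simp
  have c1 := claim (2^M)
  rw [h2M, hG0, hG1] at c1
  calc pcl hlen₂ hσ f γ k = pcl hlen₂ hσ f γ N :=
        (pcl_depth hι₁ hι₂ hε₀ hσ hlen₂ hrY hf γ k N (le_max_of_le_left (le_max_left _ _)) hv).symm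
  _ = pcl hlen₂ hσ f γ' N := c1.symm
  _ = pcl hlen₂ hσ f γ' k' :=
        pcl_depth hι₁ hι₂ hε₀ hσ hlen₂ hrY hf γ' k' N (le_max_of_le_left (le_max_right _ _)) hv'

end main2
section main3
open CategoryTheory

theorem trans_extend_left {X : Type*} [TopologicalSpace X] {x y z : X}
    (γ : Path x y) (γ' : Path y z) {u : ℝ} (hu : u ∈ Set.Icc (0:ℝ) 1) :
    (γ.trans γ').extend (u/2) = γ.extend u := by
  have h2 : u/2 ∈ Set.Icc (0:ℝ) 1 := ⟨by linarith [hu.1], by linarith [hu.2]⟩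
  rw [Path.extend_apply _ h2, Path.extend_apply _ hu, Path.trans_apply]
  split_ifs with h
  · congr 1
    ext
    simp only []
    ring
  · exfalso
    simp only [not_le] at h
    have := hu.2
    norm_num at h
    linarith

theorem trans_extend_right {X : Type*} [TopologicalSpace X] {x y z : X}
    (γ : Path x y) (γ' : Path y z) {u : ℝ} (hu : u ∈ Set.Icc (0:ℝ) 1) :
    (γ.trans γ').extend ((u+1)/2) = γ'.extend u := by
  have h2 : (u+1)/2 ∈ Set.Icc (0:ℝ) 1 := ⟨by linarith [hu.1], by linarith [hu.2]⟩
  rw [Path.extend_apply _ h2, Path.extend_apply _ hu, Path.trans_apply]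
  split_ifs with h
  · -- (u+1)/2 ≤ 1/2 forces u = 0
    have hu0 : u = 0 := le_antisymm (by norm_num at h; linarith) hu.1
    subst hu0
    have : γ ⟨2 * ((0+1)/2), by norm_num⟩ = γ 1 := by
      congr 1
      ext
      norm_num
    rw [this]
    simp only [Path.target]
    have : γ' ⟨(0:ℝ), by norm_num⟩ = γ' 0 := rfl
    rw [this]
    simp only [Path.source]
  · congr 1
    ext
    simp only []
    ring

variable {Y₁ Y₂ : Type} [MetricSpace Y₁] [MetricSpace Y₂]
  {ε₀ : ℝ}
  (hσ : 0 < ε₀/4)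
  (hlen₂ : IsLengthSpace Y₂)
  {f : Y₁ → Y₂}
  {p₁ : Y₁}

theorem pcl_trans (γ γ' : Path p₁ p₁) (k : ℕ) :
    pcl hlen₂ hσ f (γ.trans γ') (k+1) = pcl hlen₂ hσ f γ k ≫ pcl hlen₂ hσ f γ' k := by
  have hL : ∀ t : unitInterval,
      (push hlen₂ hσ (fun t => f ((γ.trans γ').extend t)) k 0 ((0+1)/2)) t
        = (push hlen₂ hσ (fun t => f (γ.extend t)) k 0 1) t := by
    apply push_congr hlen₂ hσ
    intro u hu
    show f ((γ.trans γ').extend (0 + u*((0+1)/2 - 0))) = f (γ.extend (0 + u*(1-0)))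
    congr 1
    rw [show (0:ℝ) + u*((0+1)/2 - 0) = u/2 by ring, show (0:ℝ) + u*(1-0) = u by ring]
    exact trans_extend_left γ γ' hu
  have hR : ∀ t : unitInterval,
      (push hlen₂ hσ (fun t => f ((γ.trans γ').extend t)) k ((0+1)/2) 1) t
        = (push hlen₂ hσ (fun t => f (γ'.extend t)) k 0 1) t := by
    apply push_congr hlen₂ hσ
    intro u hu
    show f ((γ.trans γ').extend ((0+1)/2 + u*(1 - (0+1)/2))) = f (γ'.extend (0 + u*(1-0)))
    congr 1
    rw [show ((0:ℝ)+1)/2 + u*(1 - (0+1)/2) = (u+1)/2 by ring, show (0:ℝ) + u*(1-0) = u by ring]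
    exact trans_extend_right γ γ' hu
  have e0 : f ((γ.trans γ').extend (0:ℝ)) = f (γ.extend (0:ℝ)) := by
    rw [Path.extend_zero, Path.extend_zero]
  have em : f ((γ.trans γ').extend (((0:ℝ)+1)/2)) = f (γ.extend (1:ℝ)) := by
    have := trans_extend_left γ γ' (Set.mem_Icc.mpr ⟨zero_le_one, le_refl 1⟩)
    rw [show ((0:ℝ)+1)/2 = 1/2 by ring, this]
  have em' : f ((γ.trans γ').extend (((0:ℝ)+1)/2)) = f (γ'.extend (0:ℝ)) := by
    rw [em]; simp
  have e1 : f ((γ.trans γ').extend (1:ℝ)) = f (γ'.extend (1:ℝ)) := by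
    rw [Path.extend_one, Path.extend_one]
  have hLm := mor_cast (Y := Y₂) _ _ e0 em hL
  have hRm := mor_cast (Y := Y₂) _ _ em' e1 hR
  unfold pcl
  simp only [push]
  rw [mor_trans, hLm, hRm]
  simp [eqToHom_trans]

end main3
section main4
open CategoryTheory
variable {Y₁ Y₂ : Type} [MetricSpace Y₁] [MetricSpace Y₂]
  {Z : Type} [MetricSpace Z] {ι₁ : Y₁ → Z} {ι₂ : Y₂ → Z}
  {ε₀ : ℝ}
  (hι₁ : Isometry ι₁) (hι₂ : Isometry ι₂)
  (hε₀ : 0 < ε₀) (hσ : 0 < ε₀/4)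
  (hlen₁ : IsLengthSpace Y₁) (hlen₂ : IsLengthSpace Y₂)
  (hrY : ∀ (c z : Y₂) (γ : Path z z), (∀ t, γ t ∈ Metric.ball c (20*ε₀)) → loopClass γ = 1)
  {f : Y₁ → Y₂} (hf : ∀ x, dist (ι₁ x) (ι₂ (f x)) ≤ ε₀)
  {g : Y₂ → Y₁} (hg : ∀ y, dist (ι₁ (g y)) (ι₂ y) ≤ ε₀)
  {p₁ : Y₁}

include hι₁ hι₂ hε₀ hσ hlen₁ hlen₂ hrY hf hg in
theorem pcl_pull (η : Path (f p₁) (f p₁)) (Kη : ℕ) (hvη : ValidP (ε₀/4) η Kη) :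
    ∃ (γ : Path p₁ p₁) (k : ℕ), ValidP (ε₀/4) γ k ∧ pcl hlen₂ hσ f γ k = mor η := by
  classical
  set ν : ℝ → Y₁ := fun t => if t ≤ 0 ∨ 1 ≤ t then p₁ else g (η.extend t) with hν
  have hν0 : ν 0 = p₁ := if_pos (Or.inl le_rfl)
  have hν1 : ν 1 = p₁ := if_pos (Or.inr le_rfl)
  have hνc : ∀ s ∈ Set.Icc (0:ℝ) 1, dist (ι₁ (ν s)) (ι₂ (η.extend s)) ≤ ε₀ := by
    intro s hs
    by_cases h : s ≤ 0 ∨ 1 ≤ s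
    · have hν' : ν s = p₁ := if_pos h
      have hη' : η.extend s = f p₁ := by
        rcases h with h | h
        · rw [le_antisymm h hs.1, Path.extend_zero]
        · rw [le_antisymm hs.2 h, Path.extend_one]
      rw [hν', hη']
      exact hf p₁
    · have hν' : ν s = g (η.extend s) := if_neg h
      rw [hν']
      exact hg _
  have hνm : ∀ s ∈ Set.Icc (0:ℝ) 1, ∀ t ∈ Set.Icc (0:ℝ) 1, |s - t| ≤ (1-0)/2^Kη →
      dist (ν s) (ν t) ≤ (9/4)*ε₀ := by
    intro s hs t ht hst
    have h1 : dist (η.extend s) (η.extend t) ≤ ε₀/4 := by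
      apply hvη s t
      rw [show (1:ℝ) - 0 = 1 by ring] at hst
      exact hst
    have h2 := hνc s hs
    have h3 := hνc t ht
    rw [← hι₂.dist_eq] at h1
    rw [← hι₁.dist_eq]
    calc dist (ι₁ (ν s)) (ι₁ (ν t))
        ≤ dist (ι₁ (ν s)) (ι₂ (η.extend s)) + dist (ι₂ (η.extend s)) (ι₂ (η.extend t))
          + dist (ι₂ (η.extend t)) (ι₁ (ν t)) := dist_triangle4 _ _ _ _
    _ ≤ (9/4)*ε₀ := by rw [dist_comm (ι₂ (η.extend t))]; linarith
  set γ0 : Path p₁ p₁ := (push hlen₁ hσ ν Kη 0 1).cast hν0.symm hν1.symm with hγ0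
  have hγ0coe : ∀ t : unitInterval, γ0 t = (push hlen₁ hσ ν Kη 0 1) t := by
    intro t
    rw [hγ0]
    exact congrFun (Path.cast_coe _ _ _) t
  have htrack : ∀ s ∈ Set.Icc (0:ℝ) 1,
      dist (ι₁ (γ0.extend s)) (ι₂ (η.extend s)) ≤ (9/4)*ε₀ + ε₀/4 + ε₀ + ε₀/4 := by
    intro s hs
    have hT := push_track hlen₁ hσ ι₁ hι₁ ν (fun t => ι₂ (η.extend t)) Kη 0 1 zero_le_one
      hνm
      (fun s hs t ht hst => by
        rw [hι₂.dist_eq]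
        apply hvη s t
        refine hst.trans ?_
        rw [show (1:ℝ) - 0 = 1 by ring])
      hνc ⟨s, hs⟩
    have harg : (0:ℝ) + (⟨s, hs⟩ : unitInterval) * (1 - 0) = s := by push_cast; ring
    rw [harg] at hT
    have hext : γ0.extend s = (push hlen₁ hσ ν Kη 0 1) ⟨s, hs⟩ := by
      rw [Path.extend_apply γ0 hs]
      exact hγ0coe _
    rw [hext]
    exact hT
  obtain ⟨Kγ, hKγ⟩ := path_mesh γ0 hσ
  set N := max Kγ Kη with hNdef
  refine ⟨γ0, N, (show ValidP (ε₀/4) γ0 Kγ from hKγ).mono (le_max_left _ _), ?_⟩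
  have hcl : ∀ s ∈ Set.Icc (0:ℝ) 1, dist (f (γ0.extend s)) (η.extend s) ≤ 5*ε₀ := by
    intro s hs
    have h1 := htrack s hs
    have h2 := hf (γ0.extend s)
    rw [← hι₂.dist_eq]
    calc dist (ι₂ (f (γ0.extend s))) (ι₂ (η.extend s))
        ≤ dist (ι₂ (f (γ0.extend s))) (ι₁ (γ0.extend s)) + dist (ι₁ (γ0.extend s)) (ι₂ (η.extend s)) :=
          dist_triangle _ _ _
    _ ≤ 5*ε₀ := by rw [dist_comm (ι₂ (f (γ0.extend s)))]; linarith
  have E := push_vs_ref hlen₂ hε₀ hσ hrY (fun t => f (γ0.extend t)) η.extend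
    η.continuous_extend N 0 1 zero_le_one
    (fun s _ t _ hst => by
      apply hvη.mono (le_max_right Kγ Kη) s t
      rw [show (1:ℝ) - 0 = 1 by ring] at hst
      exact hst)
    hcl
  have e1 : f (γ0.extend (1:ℝ)) = η.extend (1:ℝ) := by rw [Path.extend_one, Path.extend_one]
  have e0 : f (γ0.extend (0:ℝ)) = η.extend (0:ℝ) := by rw [Path.extend_zero, Path.extend_zero]
  rw [mor_sPath_eq hlen₂ hε₀ hσ hrY _ _ e1, mor_sPath_eq hlen₂ hε₀ hσ hrY _ _ e0] at E
  have hseg : mor (seg η.extend η.continuous_extend 0 1)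
      = eqToHom (by rw [Path.extend_zero]) ≫ mor η ≫ eqToHom (by rw [Path.extend_one]) := by
    apply mor_cast _ _ (by rw [Path.extend_zero]) (by rw [Path.extend_one])
    intro t
    show η.extend (0 + (t:ℝ)*(1-0)) = η t
    rw [show (0:ℝ) + (t:ℝ)*(1-0) = (t:ℝ) by ring]
    exact η.extend_extends' t
  rw [hseg] at E
  unfold pcl
  have := conj_step _ _ (by exact congrArg FundamentalGroupoid.mk e0)
    (by exact congrArg FundamentalGroupoid.mk e1) E
    (show (FundamentalGroupoid.mk (f p₁) : FundamentalGroupoid Y₂)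
      = FundamentalGroupoid.mk (f (γ0.extend (0:ℝ))) by rw [Path.extend_zero])
    (show (FundamentalGroupoid.mk (f (γ0.extend (1:ℝ))) : FundamentalGroupoid Y₂)
      = FundamentalGroupoid.mk (f p₁) by rw [Path.extend_one])
  rw [this]
  simp [eqToHom_trans]

end main4
section main5
open CategoryTheory
variable {Y₁ Y₂ : Type} [MetricSpace Y₁] [MetricSpace Y₂]
  {Z : Type} [MetricSpace Z] {ι₁ : Y₁ → Z} {ι₂ : Y₂ → Z}
  {ε₀ : ℝ}
  (hι₁ : Isometry ι₁) (hι₂ : Isometry ι₂)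
  (hε₀ : 0 < ε₀) (hσ : 0 < ε₀/4)
  (hlen₁ : IsLengthSpace Y₁) (hlen₂ : IsLengthSpace Y₂)
  (hrY : ∀ (c z : Y₂) (γ : Path z z), (∀ t, γ t ∈ Metric.ball c (20*ε₀)) → loopClass γ = 1)
  {f : Y₁ → Y₂} (hf : ∀ x, dist (ι₁ x) (ι₂ (f x)) ≤ ε₀)
  {g : Y₂ → Y₁} (hg : ∀ y, dist (ι₁ (g y)) (ι₂ y) ≤ ε₀)
  (p₁ : Y₁)

include hι₁ hι₂ hε₀ hσ hlen₁ hlen₂ hrY hf hg in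
theorem exists_surj :
    ∃ Φ : FundamentalGroup Y₁ p₁ →* FundamentalGroup Y₂ (f p₁), Function.Surjective Φ := by
  classical
  choose Kof hKof using fun γ : Path p₁ p₁ => path_mesh γ hσ
  set Φ₀ : Path p₁ p₁ → ((FundamentalGroupoid.mk (f p₁) : FundamentalGroupoid Y₂)
      ⟶ FundamentalGroupoid.mk (f p₁)) := fun γ => pcl hlen₂ hσ f γ (Kof γ) with hΦ₀
  have wd : ∀ γ γ' : Path p₁ p₁, Path.Homotopic γ γ' → Φ₀ γ = Φ₀ γ' := fun γ γ' h =>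
    pcl_homotopic hι₁ hι₂ hε₀ hσ hlen₂ hrY hf γ γ' h (Kof γ) (Kof γ') (hKof γ) (hKof γ')
  set Ψ : ((FundamentalGroupoid.mk p₁ : FundamentalGroupoid Y₁) ⟶ FundamentalGroupoid.mk p₁)
      → ((FundamentalGroupoid.mk (f p₁) : FundamentalGroupoid Y₂) ⟶ FundamentalGroupoid.mk (f p₁)) :=
    fun u => Quotient.liftOn u Φ₀ (fun a b h => wd a b h) with hΨdef
  have hΨmor : ∀ γ : Path p₁ p₁, Ψ (mor γ) = Φ₀ γ := fun γ => rfl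
  have hpclK : ∀ (γ : Path p₁ p₁) (k : ℕ), ValidP (ε₀/4) γ k →
      pcl hlen₂ hσ f γ k = Φ₀ γ := by
    intro γ k hk
    rw [hΦ₀]
    calc pcl hlen₂ hσ f γ k
        = pcl hlen₂ hσ f γ (max k (Kof γ)) :=
          (pcl_depth hι₁ hι₂ hε₀ hσ hlen₂ hrY hf γ k _ (le_max_left _ _) hk).symm
    _ = pcl hlen₂ hσ f γ (Kof γ) :=
          pcl_depth hι₁ hι₂ hε₀ hσ hlen₂ hrY hf γ (Kof γ) _ (le_max_right _ _) (hKof γ)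
  have hΨcomp : ∀ u v, Ψ (u ≫ v) = Ψ u ≫ Ψ v := by
    intro u v
    refine Quotient.inductionOn₂ u v ?_
    intro γ γ'
    have h1 : (⟦γ⟧ : Path.Homotopic.Quotient p₁ p₁) ≫ ⟦γ'⟧ = (mor (γ.trans γ')) :=
      (mor_trans γ γ').symm
    rw [h1, hΨmor]
    show Φ₀ (γ.trans γ') = Φ₀ γ ≫ Φ₀ γ'
    set N := max (max (Kof γ) (Kof γ')) (Kof (γ.trans γ')) with hN
    have h2 : Φ₀ (γ.trans γ') = pcl hlen₂ hσ f (γ.trans γ') (N+1) :=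
      (hpclK (γ.trans γ') (N+1)
        ((show ValidP (ε₀/4) _ _ from hKof (γ.trans γ')).mono ((le_max_right _ _).trans (Nat.le_succ _)))).symm
    rw [h2, pcl_trans hσ hlen₂ γ γ' N,
      hpclK γ N ((show ValidP (ε₀/4) _ _ from hKof γ).mono ((le_max_left _ _).trans (le_max_left _ _))),
      hpclK γ' N ((show ValidP (ε₀/4) _ _ from hKof γ').mono ((le_max_right _ _).trans (le_max_left _ _)))]
  set ΦA : FundamentalGroup Y₁ p₁ → FundamentalGroup Y₂ (f p₁) :=
    fun x => Ψ x with hΦA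
  have hΦAhom : ∀ x, ΦA x = Ψ x := fun x => rfl
  have hmul : ∀ x y, ΦA (x * y) = ΦA x * ΦA y := by
    intro x y
    show Ψ (y ≫ x) = ΦA y ≫ ΦA x
    rw [hΨcomp, hΦAhom, hΦAhom]
  refine ⟨MonoidHom.mk' ΦA hmul, ?_⟩
  intro v
  obtain ⟨η, hη⟩ := Quotient.exists_rep (v :
    (FundamentalGroupoid.mk (f p₁) : FundamentalGroupoid Y₂) ⟶ FundamentalGroupoid.mk (f p₁))
  obtain ⟨Kη, hKη⟩ := path_mesh η hσ
  obtain ⟨γ0, k0, hv0, hp0⟩ := pcl_pull hι₁ hι₂ hε₀ hσ hlen₁ hlen₂ hrY hf hg η Kη hKη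
  refine ⟨mor γ0, ?_⟩
  show Ψ (mor γ0) = v
  rw [hΨmor, ← hpclK γ0 k0 hv0, hp0]
  exact hη
end main5

/-- **Statement 3** (Sormani–Wei, Theorem 2.1). Let `Y₁, Y₂` be compact length spaces
with `Y₂` semi-locally simply connected, and let `r > 0` be (at most) the semi-locally
simple connectivity radius `r(Y₂)`, i.e. every loop lying in an open ball of radius `r`
in `Y₂` is null-homotopic in `Y₂`.  If `d_GH(Y₁, Y₂) ≤ r/20` then there is a surjective
homomorphism `Φ : π₁(Y₁) → π₁(Y₂)`. -/
theorem statement3 (Y₁ Y₂ : Type) [MetricSpace Y₁] [CompactSpace Y₁] [Nonempty Y₁]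
    [MetricSpace Y₂] [CompactSpace Y₂] [Nonempty Y₂]
    (hlen₁ : IsLengthSpace Y₁) (hlen₂ : IsLengthSpace Y₂)
    (hslsc : SemiLocallySimplyConnected Y₂)
    (r : ℝ) (hr : 0 < r)
    (hrY : ∀ (c z : Y₂) (γ : Path z z), (∀ t, γ t ∈ Metric.ball c r) → loopClass γ = 1)
    (hGH : GromovHausdorff.ghDist Y₁ Y₂ ≤ r / 20)
    (p₁ : Y₁) (p₂ : Y₂) :
    ∃ Φ : FundamentalGroup Y₁ p₁ →* FundamentalGroup Y₂ p₂, Function.Surjective Φ := by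
  have hε₀ : 0 < r/20 := by linarith
  have hσ : 0 < (r/20)/4 := by linarith
  have hrY' : ∀ (c z : Y₂) (γ : Path z z),
      (∀ t, γ t ∈ Metric.ball c (20*(r/20))) → loopClass γ = 1 := by
    intro c z γ hγ
    apply hrY c z γ
    intro t
    have := hγ t
    rwa [show 20*(r/20) = r by ring] at this
  have hι₁ := GromovHausdorff.isometry_optimalGHInjl Y₁ Y₂
  have hι₂ := GromovHausdorff.isometry_optimalGHInjr Y₁ Y₂
  set ι₁ := GromovHausdorff.optimalGHInjl Y₁ Y₂ with hi1
  set ι₂ := GromovHausdorff.optimalGHInjr Y₁ Y₂ with hi2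
  have hb1 : IsCompact (Set.range ι₁) := isCompact_range hι₁.continuous
  have hb2 : IsCompact (Set.range ι₂) := isCompact_range hι₂.continuous
  have hfin : EMetric.hausdorffEdist (Set.range ι₁) (Set.range ι₂) ≠ ⊤ :=
    Metric.hausdorffEdist_ne_top_of_nonempty_of_bounded (Set.range_nonempty _)
      (Set.range_nonempty _) hb1.isBounded hb2.isBounded
  have hHD : Metric.hausdorffDist (Set.range ι₁) (Set.range ι₂) ≤ r/20 := by
    rw [hi1, hi2, GromovHausdorff.hausdorffDist_optimal]
    exact hGH
  have hf : ∀ x : Y₁, ∃ y : Y₂, dist (ι₁ x) (ι₂ y) ≤ r/20 := by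
    intro x
    obtain ⟨z, hz, hzd⟩ := hb2.exists_infDist_eq_dist (Set.range_nonempty _) (ι₁ x)
    obtain ⟨y, rfl⟩ := hz
    exact ⟨y, by
      rw [← hzd]
      exact (Metric.infDist_le_hausdorffDist_of_mem (Set.mem_range_self x) hfin).trans hHD⟩
  have hg : ∀ y : Y₂, ∃ x : Y₁, dist (ι₁ x) (ι₂ y) ≤ r/20 := by
    intro y
    obtain ⟨z, hz, hzd⟩ := hb1.exists_infDist_eq_dist (Set.range_nonempty _) (ι₂ y)
    obtain ⟨x, rfl⟩ := hz
    refine ⟨x, ?_⟩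
    rw [dist_comm, ← hzd]
    refine (Metric.infDist_le_hausdorffDist_of_mem (Set.mem_range_self y) ?_).trans ?_
    · rwa [EMetric.hausdorffEdist_comm]
    · rwa [Metric.hausdorffDist_comm]
  choose f hfs using hf
  choose g hgs using hg
  obtain ⟨Φb, hΦb⟩ := exists_surj hι₁ hι₂ hε₀ hσ hlen₁ hlen₂ hrY' hfs hgs p₁
  have hpc : PathConnectedSpace Y₂ := hlen₂.pathConnectedSpace
  set e := FundamentalGroup.fundamentalGroupMulEquivOfPath (X := Y₂)
    (PathConnectedSpace.somePath (f p₁) p₂) with he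
  exact ⟨e.toMonoidHom.comp Φb, e.surjective.comp hΦb⟩


end
end

section
/- Let Y be a compact length space, p ∈ Y and δ > 0. For every nontrivial element g of the deck transformation group G(Y, δ) of the δ-cover Ỹ^δ, the δ-length of g satisfies l(g, δ) ≥ δ. -/
open Metric Filter Topology Set

noncomputable section

attribute [local instance] Path.Homotopic.setoid

/-- **Statement 7** (Sormani–Wei, Lemma 3.4, first part). For a compact length space `Y`
and `δ > 0`, every nontrivial deck transformation `h` of the `δ`-cover `Ỹ^δ` has
`δ`-length `l(h, δ) = inf_q d(q, h q) ≥ δ`. -/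
theorem statement7 (Y : Type) [MetricSpace Y] [CompactSpace Y] [Nonempty Y]
    (hY : IsLengthSpace Y) (δ : ℝ) (hδ : 0 < δ)
    (C : MCov Y) (hC : IsDeltaCover C.π δ)
    (h : Equiv.Perm C.E) (hmem : h ∈ Deck C.π) (hne : h ≠ 1) :
    δ ≤ ⨅ q : C.E, dist q (h q) := by
  haveI := hC.conn
  obtain ⟨hcont, hcont_inv, hcomm⟩ := hmem
  by_contra hlt
  push_neg at hlt
  -- get a point q with dist q (h q) < δ
  obtain ⟨q, hq⟩ : ∃ q : C.E, dist q (h q) < δ := by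
    by_contra hall
    push_neg at hall
    exact absurd (le_ciInf hall) (not_le.mpr hlt)
  -- find a short path from q to h q
  have hed : edist q (h q) < ENNReal.ofReal δ := edist_lt_ofReal.mpr hq
  rw [hC.length q (h q)] at hed
  obtain ⟨γ', hγ'⟩ := iInf_lt_iff.mp hed
  -- project to a loop in Y
  have hπ : C.π (h q) = C.π q := hcomm q
  let β : Path (C.π q) (C.π q) :=
    { toFun := fun t => C.π (γ' t)
      continuous_toFun := hC.covering.continuous.comp γ'.continuous
      source' := by simp [γ'.source]
      target' := by simp [γ'.target, hπ] }
  -- β lies in the δ-ball around C.π q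
  have hball : ∀ t, β t ∈ Metric.ball (C.π q) δ := by
    intro t
    have h1 : edist (γ'.extend 0) (γ'.extend t) ≤ γ'.elength :=
      eVariationOn.edist_le _ (Set.left_mem_Icc.mpr zero_le_one) t.2
    rw [show ((0:ℝ) : ℝ) = ((0 : unitInterval) : ℝ) by norm_num,
      γ'.extend_extends' (0 : unitInterval), γ'.extend_apply ⟨t.2.1, t.2.2⟩] at h1
    have h2 : edist (γ' 0) (γ' t) < ENNReal.ofReal δ := lt_of_le_of_lt h1 hγ'
    have h3 : dist (γ' 0) (γ' t) < δ := edist_lt_ofReal.mp h2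
    have h4 : dist (C.π (γ' 0)) (C.π (γ' t)) < δ :=
      lt_of_le_of_lt (hC.nonexpanding _ _) h3
    have : dist (β t) (C.π q) < δ := by
      rw [dist_comm]
      simpa [β, γ'.source] using h4
    exact Metric.mem_ball.mpr this
  -- loopClass β lies in the Spanier subgroup
  have hmemδ : loopClass β ∈ piDelta Y δ (C.π q) := by
    apply Subgroup.subset_normalClosure
    refine ⟨C.π q, C.π q, β, Path.refl (C.π q), hball, ?_⟩
    unfold loopClass
    congr 1
    rw [Path.refl_symm]
    refine (Quotient.sound ?_).symm
    exact Path.Homotopic.trans ⟨Path.Homotopy.transRefl _⟩ ⟨Path.Homotopy.reflTrans β⟩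
  -- the lift of β starting at q must close up, so h q = q
  have hfix : h q = q := by
    have := hC.lifted_loops (C.π q) β q γ'.toContinuousMap rfl (fun t => rfl) γ'.source
    have h1 : γ'.toContinuousMap 1 = q := this.mpr hmemδ
    rw [show γ'.toContinuousMap 1 = γ' 1 from rfl, γ'.target] at h1
    exact h1
  -- a deck transformation with a fixed point is the identity
  apply hne
  have heq : ⇑h = id := hC.covering.eq_of_comp_eq hcont continuous_id (funext hcomm) q hfix
  ext x
  exact congrFun heq x

end
end
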